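/- Let r = min{m,n}, s ∈ {0,1,…,r}, S = {y ∈ ℝ^{m×n} : rank(y) ≤ s}, and x̄ ∈ S. If w is a limit of proximal normals to S, i.e., w = lim_k w^k with w^k = t_k(x^k − y^k), x^k → x̄, x^k ∉ S, y^k ∈ P_S(x^k), and t_k ≥ 0, then rank(w) ≤ r − s and ker(w)^⊥ ∩ ker(x̄)^⊥ = {0}. Consequently N_S(x̄) ⊆ {v : ker(v)^⊥ ∩ ker(x̄)^⊥ = {0}, rank(v) ≤ r − s}. -/

import Mathlib

open Filter Topology Matrix Set
open scoped ENNReal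

attribute [local instance] Matrix.frobeniusNormedAddCommGroup

noncomputable section

namespace RankPaper

variable {m n : ℕ}

/-- Singular values of `x` in decreasing order (`svals x ⟨0,_⟩ = σ₁(x)` is the largest),
indexed by `Fin (min m n)`; defined as the square roots of the decreasingly sorted
eigenvalues of `xᴴ * x`. -/
noncomputable def svals (x : Matrix (Fin m) (Fin n) ℝ) : Fin (min m n) → ℝ := fun j =>
  Real.sqrt
    (((by simpa using Matrix.isHermitian_conjTranspose_mul_self x : (xᵀ * x).IsHermitian).eigenvalues ∘
        ⇑(Tuple.sort (by simpa using Matrix.isHermitian_conjTranspose_mul_self x : (xᵀ * x).IsHermitian).eigenvalues))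
      (Fin.rev (Fin.castLE (min_le_right m n) j)))

/-- The `m × n` diagonal matrix of singular values `Σ(x)`. -/
noncomputable def SigmaMat (x : Matrix (Fin m) (Fin n) ℝ) : Matrix (Fin m) (Fin n) ℝ :=
  Matrix.of fun i j =>
    if h : (i : ℕ) = (j : ℕ) ∧ (i : ℕ) < min m n then svals x ⟨(i : ℕ), h.2⟩ else 0

/-- The truncated diagonal matrix `Σ_s(x)` keeping only the `s` largest singular values. -/
noncomputable def SigmaTrunc (s : ℕ) (x : Matrix (Fin m) (Fin n) ℝ) :
    Matrix (Fin m) (Fin n) ℝ :=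
  Matrix.of fun i j =>
    if h : (i : ℕ) = (j : ℕ) ∧ (i : ℕ) < min m n ∧ (i : ℕ) < s then
      svals x ⟨(i : ℕ), h.2.1⟩ else 0

/-- The (multivalued) projection onto a set `Ω ⊆ ℝ^{m×n}` w.r.t. the Frobenius norm. -/
def projSet (Ω : Set (Matrix (Fin m) (Fin n) ℝ)) (x : Matrix (Fin m) (Fin n) ℝ) :
    Set (Matrix (Fin m) (Fin n) ℝ) :=
  {y | y ∈ Ω ∧ ∀ z ∈ Ω, ‖x - y‖ ≤ ‖x - z‖}

/-- The proximal normal cone to `Ω` at `xb`: all vectors `t • (x - xb)` with `t ≥ 0`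
and `xb` a nearest point of `Ω` to `x`. -/
def proxNormalCone (Ω : Set (Matrix (Fin m) (Fin n) ℝ)) (xb : Matrix (Fin m) (Fin n) ℝ) :
    Set (Matrix (Fin m) (Fin n) ℝ) :=
  {v | ∃ t : ℝ, 0 ≤ t ∧ ∃ x, xb ∈ projSet Ω x ∧ v = t • (x - xb)}

/-- The limiting (Mordukhovich) normal cone to `Ω` at `xb`, described via limits of
proximal-normal directions `v^k ∈ cone (x^k - P_Ω(x^k))` along sequences `x^k → xb`. -/
def normalCone (Ω : Set (Matrix (Fin m) (Fin n) ℝ)) (xb : Matrix (Fin m) (Fin n) ℝ) :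
    Set (Matrix (Fin m) (Fin n) ℝ) :=
  {v | ∃ x w : ℕ → Matrix (Fin m) (Fin n) ℝ,
      Tendsto x atTop (𝓝 xb) ∧ Tendsto w atTop (𝓝 v) ∧
      ∀ k, ∃ t : ℝ, 0 ≤ t ∧ ∃ y ∈ projSet Ω (x k), w k = t • (x k - y)}

/-- The row space of `x`, i.e. `range (xᵀ) = ker(x)ᗮ ⊆ ℝⁿ`. -/
def rowSpace (x : Matrix (Fin m) (Fin n) ℝ) : Submodule ℝ (Fin n → ℝ) :=
  LinearMap.range (Matrix.mulVecLin xᵀ)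

/-- `𝕁(x, α) = {j : σ_j(x) ≥ α}` (in particular empty for `α = ∞`). -/
def Jset (x : Matrix (Fin m) (Fin n) ℝ) (α : ℝ≥0∞) : Set (Fin (min m n)) :=
  {j | α ≤ ENNReal.ofReal (svals x j)}

/-- `α_s(x) = sup {α : |𝕁(x,α)| ≥ s}`. -/
noncomputable def alphaS (s : ℕ) (x : Matrix (Fin m) (Fin n) ℝ) : ℝ≥0∞ :=
  sSup {α : ℝ≥0∞ | s ≤ (Jset x α).ncard}


/-! ### Auxiliary lemmas -/

/-- sum of squares of entries -/
def Q (A : Matrix (Fin m) (Fin n) ℝ) : ℝ := ∑ i, ∑ j, (A i j)^2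

lemma Q_nonneg (A : Matrix (Fin m) (Fin n) ℝ) : 0 ≤ Q A :=
  Finset.sum_nonneg fun _ _ => Finset.sum_nonneg fun _ _ => sq_nonneg _

lemma norm_eq_sqrt_Q (A : Matrix (Fin m) (Fin n) ℝ) : ‖A‖ = Real.sqrt (Q A) := by
  rw [Matrix.frobenius_norm_def, Real.sqrt_eq_rpow]
  congr 1
  refine Finset.sum_congr rfl fun i _ => Finset.sum_congr rfl fun j _ => ?_
  rw [show ((2:ℝ)) = ((2:ℕ):ℝ) by norm_num, Real.rpow_natCast, Real.norm_eq_abs, sq_abs]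

lemma norm_le_iff_Q {A B : Matrix (Fin m) (Fin n) ℝ} : ‖A‖ ≤ ‖B‖ ↔ Q A ≤ Q B := by
  rw [norm_eq_sqrt_Q, norm_eq_sqrt_Q]
  exact ⟨fun h => by nlinarith [Real.sq_sqrt (Q_nonneg A), Real.sq_sqrt (Q_nonneg B),
      Real.sqrt_nonneg (Q A), Real.sqrt_nonneg (Q B)],
    fun h => Real.sqrt_le_sqrt h⟩

lemma Q_eq_zero_iff {A : Matrix (Fin m) (Fin n) ℝ} : Q A = 0 ↔ A = 0 := by
  constructor
  · intro h
    ext i j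
    have h1 : ∀ i ∈ Finset.univ, (0:ℝ) ≤ ∑ j, (A i j)^2 :=
      fun _ _ => Finset.sum_nonneg fun _ _ => sq_nonneg _
    have := (Finset.sum_eq_zero_iff_of_nonneg h1).mp h i (Finset.mem_univ i)
    have := (Finset.sum_eq_zero_iff_of_nonneg (fun _ _ => sq_nonneg _)).mp this j
      (Finset.mem_univ j)
    simpa [pow_eq_zero_iff] using this
  · rintro rfl; simp [Q]

/-- entrywise inner product of matrices -/
def ip (A B : Matrix (Fin m) (Fin n) ℝ) : ℝ := ∑ i, ∑ j, A i j * B i j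

lemma Q_sub_smul (A B : Matrix (Fin m) (Fin n) ℝ) (c : ℝ) :
    Q (A - c • B) = Q A - 2 * c * ip A B + c^2 * Q B := by
  unfold Q ip
  rw [Finset.mul_sum, Finset.mul_sum, ← Finset.sum_sub_distrib, ← Finset.sum_add_distrib]
  refine Finset.sum_congr rfl fun i _ => ?_
  rw [Finset.mul_sum, Finset.mul_sum, ← Finset.sum_sub_distrib, ← Finset.sum_add_distrib]
  refine Finset.sum_congr rfl fun j _ => ?_
  simp only [Matrix.sub_apply, Matrix.smul_apply, smul_eq_mul]
  ring

lemma proj_eq_self {Ω : Set (Matrix (Fin m) (Fin n) ℝ)} {x y : Matrix (Fin m) (Fin n) ℝ}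
    (hx : x ∈ Ω) (hy : y ∈ projSet Ω x) : y = x := by
  have h1 := hy.2 x hx
  simp only [sub_self, norm_zero] at h1
  have h2 : ‖x - y‖ = 0 := le_antisymm h1 (norm_nonneg _)
  exact (sub_eq_zero.mp (norm_eq_zero.mp h2)).symm

/-- A minimizer is orthogonal to any direction staying in the set. -/
lemma ip_eq_zero_of_min {Ω : Set (Matrix (Fin m) (Fin n) ℝ)} {x y u : Matrix (Fin m) (Fin n) ℝ}
    (hy : y ∈ projSet Ω x) (hu : ∀ c : ℝ, y + c • u ∈ Ω) : ip (x - y) u = 0 := by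
  have key : ∀ c : ℝ, Q (x - y) ≤ Q (x - y) - 2 * c * ip (x - y) u + c ^ 2 * Q u := by
    intro c
    have := hy.2 (y + c • u) (hu c)
    rw [norm_le_iff_Q] at this
    have hxy : x - (y + c • u) = (x - y) - c • u := by abel
    rw [hxy, Q_sub_smul] at this
    exact this
  rcases eq_or_lt_of_le (Q_nonneg u) with h0 | hpos
  · have hu0 : u = 0 := Q_eq_zero_iff.mp h0.symm
    simp [ip, hu0]
  · set d := ip (x - y) u with hd
    have hc := key (d / Q u)
    have heq : 2 * (d / Q u) * d - (d / Q u) ^ 2 * Q u = d ^ 2 / Q u := by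
      field_simp
      ring
    have h2 : d ^ 2 / Q u ≤ 0 := by linarith
    have h3 : d ^ 2 ≤ 0 := by
      by_contra hlt
      push_neg at hlt
      exact absurd (div_pos hlt hpos) (not_lt.mpr h2)
    have := sq_nonneg d
    nlinarith

lemma rank_le_of_range_le {p : ℕ} {A : Matrix (Fin m) (Fin n) ℝ} {B : Matrix (Fin m) (Fin p) ℝ}
    (h : LinearMap.range A.mulVecLin ≤ LinearMap.range B.mulVecLin) : A.rank ≤ B.rank :=
  Submodule.finrank_mono h

lemma rank_smul_le (c : ℝ) (A : Matrix (Fin m) (Fin n) ℝ) : (c • A).rank ≤ A.rank := by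
  refine rank_le_of_range_le ?_
  rintro - ⟨v, rfl⟩
  exact ⟨c • v, by simp [Matrix.mulVecLin_apply, Matrix.smul_mulVec, Matrix.mulVec_smul]⟩

lemma rank_add_le' (A B : Matrix (Fin m) (Fin n) ℝ) : (A + B).rank ≤ A.rank + B.rank := by
  have h : LinearMap.range (A + B).mulVecLin ≤
      LinearMap.range A.mulVecLin ⊔ LinearMap.range B.mulVecLin := by
    rintro - ⟨v, rfl⟩
    exact Submodule.mem_sup.mpr ⟨A.mulVec v, ⟨v, rfl⟩, B.mulVec v, ⟨v, rfl⟩,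
      by simp [Matrix.mulVecLin_apply, Matrix.add_mulVec]⟩
  exact le_trans (Submodule.finrank_mono h)
    (Submodule.finrank_add_le_finrank_add_finrank _ _)

/-- First-order optimality: the residual is orthogonal to row-space perturbations. -/
lemma residual_mul_transpose_eq_zero {s : ℕ} {x y : Matrix (Fin m) (Fin n) ℝ}
    (hy : y ∈ projSet {z : Matrix (Fin m) (Fin n) ℝ | z.rank ≤ s} x) :
    (x - y) * yᵀ = 0 := by
  classical
  ext i k
  set u : Matrix (Fin m) (Fin n) ℝ := Matrix.of fun i' j' => if i' = i then y k j' else 0 with hu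
  have hmem : ∀ c : ℝ, y + c • u ∈ {z : Matrix (Fin m) (Fin n) ℝ | z.rank ≤ s} := by
    intro c
    have hrange : LinearMap.range (y + c • u)ᵀ.mulVecLin ≤ LinearMap.range yᵀ.mulVecLin := by
      rintro - ⟨v, rfl⟩
      refine ⟨v + c • (Pi.single k (v i) : Fin m → ℝ), ?_⟩
      ext j'
      simp only [Matrix.mulVecLin_apply, Matrix.mulVec, dotProduct,
        Matrix.transpose_apply, Matrix.add_apply, Matrix.smul_apply, hu, Matrix.of_apply,
        Pi.add_apply, Pi.smul_apply, smul_eq_mul, Pi.single_apply, mul_add, add_mul,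
        mul_ite, ite_mul, mul_zero, zero_mul, mul_one, Finset.sum_add_distrib,
        Finset.sum_ite_eq, Finset.sum_ite_eq', Finset.mem_univ, if_true]
      ring
    have h1 : (y + c • u).rank ≤ y.rank := by
      rw [← Matrix.rank_transpose (y + c • u), ← Matrix.rank_transpose y]
      exact rank_le_of_range_le hrange
    exact h1.trans hy.1
  have h0 := ip_eq_zero_of_min hy hmem
  have : ip (x - y) u = ((x - y) * yᵀ) i k := by
    simp only [ip, hu, Matrix.of_apply, mul_ite, mul_zero, Matrix.mul_apply,
      Matrix.transpose_apply]
    have hstep : ∀ i' : Fin m, (∑ j', if i' = i then (x - y) i' j' * y k j' else 0)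
        = if i' = i then ∑ j', (x - y) i j' * y k j' else 0 := by
      intro i'; split <;> simp_all
    rw [Finset.sum_congr rfl fun i' _ => hstep i']
    simp
  rw [← this, h0, Matrix.zero_apply]

/-- First-order optimality: column version. -/
lemma transpose_residual_mul_eq_zero {s : ℕ} {x y : Matrix (Fin m) (Fin n) ℝ}
    (hy : y ∈ projSet {z : Matrix (Fin m) (Fin n) ℝ | z.rank ≤ s} x) :
    (x - y)ᵀ * y = 0 := by
  classical
  ext j k
  set u : Matrix (Fin m) (Fin n) ℝ := Matrix.of fun i' j' => if j' = j then y i' k else 0 with hu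
  have hmem : ∀ c : ℝ, y + c • u ∈ {z : Matrix (Fin m) (Fin n) ℝ | z.rank ≤ s} := by
    intro c
    have hrange : LinearMap.range (y + c • u).mulVecLin ≤ LinearMap.range y.mulVecLin := by
      rintro - ⟨v, rfl⟩
      refine ⟨v + c • (Pi.single k (v j) : Fin n → ℝ), ?_⟩
      ext i'
      simp only [Matrix.mulVecLin_apply, Matrix.mulVec, dotProduct,
        Matrix.add_apply, Matrix.smul_apply, hu, Matrix.of_apply,
        Pi.add_apply, Pi.smul_apply, smul_eq_mul, Pi.single_apply, mul_add, add_mul,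
        mul_ite, ite_mul, mul_zero, zero_mul, mul_one, Finset.sum_add_distrib,
        Finset.sum_ite_eq, Finset.sum_ite_eq', Finset.mem_univ, if_true]
      ring
    exact (rank_le_of_range_le hrange).trans hy.1
  have h0 := ip_eq_zero_of_min hy hmem
  have : ip (x - y) u = ((x - y)ᵀ * y) j k := by
    simp only [ip, hu, Matrix.of_apply, mul_ite, mul_zero, Matrix.mul_apply,
      Matrix.transpose_apply]
    rw [Finset.sum_comm]
    have hstep : ∀ j' : Fin n, (∑ i', if j' = j then (x - y) i' j' * y i' k else 0)
        = if j' = j then ∑ i', (x - y) i' j * y i' k else 0 := by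
      intro j'; split <;> simp_all
    rw [Finset.sum_congr rfl fun j' _ => hstep j']
    simp
  rw [← this, h0, Matrix.zero_apply]

lemma range_mulVecLin_inf_eq_bot {p q : ℕ} {A : Matrix (Fin m) (Fin p) ℝ}
    {B : Matrix (Fin m) (Fin q) ℝ} (h : Aᵀ * B = 0) :
    LinearMap.range A.mulVecLin ⊓ LinearMap.range B.mulVecLin = ⊥ := by
  rw [eq_bot_iff]
  rintro v ⟨⟨a, rfl⟩, b, hb⟩
  have hBA : Bᵀ * A = 0 := by
    have := congrArg Matrix.transpose h
    rwa [Matrix.transpose_mul, Matrix.transpose_transpose, Matrix.transpose_zero] at this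
  have hv0 : B.mulVec b ⬝ᵥ A.mulVec a = 0 := by
    rw [Matrix.dotProduct_mulVec, ← Matrix.mulVec_transpose, Matrix.mulVec_mulVec, h,
      Matrix.zero_mulVec, zero_dotProduct]
  have hb' : B.mulVec b = A.mulVec a := hb
  have hv : A.mulVec a ⬝ᵥ A.mulVec a = 0 := by
    nth_rewrite 1 [← hb']
    exact hv0
  have hz := dotProduct_self_eq_zero.mp hv
  simp [Matrix.mulVecLin_apply, hz]

lemma rank_eq_finrank_rowSpace (A : Matrix (Fin m) (Fin n) ℝ) :
    A.rank = Module.finrank ℝ (rowSpace A) := by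
  rw [← Matrix.rank_transpose]
  rfl

/-- If the residual is "doubly orthogonal" to `y`, then ranks add up within `min m n`. -/
lemma rank_add_rank_le_min {w y : Matrix (Fin m) (Fin n) ℝ}
    (h1 : w * yᵀ = 0) (h2 : wᵀ * y = 0) : w.rank + y.rank ≤ min m n := by
  have hrow : w.rank + y.rank ≤ n := by
    have hd : LinearMap.range wᵀ.mulVecLin ⊓ LinearMap.range yᵀ.mulVecLin = ⊥ :=
      range_mulVecLin_inf_eq_bot (by rwa [Matrix.transpose_transpose])
    have := Submodule.finrank_add_finrank_le_of_disjoint (disjoint_iff.mpr hd)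
    rw [rank_eq_finrank_rowSpace, rank_eq_finrank_rowSpace]
    exact this.trans (by simp)
  have hcol : w.rank + y.rank ≤ m := by
    have hd : LinearMap.range w.mulVecLin ⊓ LinearMap.range y.mulVecLin = ⊥ :=
      range_mulVecLin_inf_eq_bot h2
    have := Submodule.finrank_add_finrank_le_of_disjoint (disjoint_iff.mpr hd)
    rw [Matrix.rank, Matrix.rank]
    simpa [Module.finrank_fin_fun] using this
  exact le_min hcol hrow

/-- If `x` has rank `> s` then any nearest rank-`≤ s` matrix has rank exactly `s`. -/
lemma rank_proj_ge {s : ℕ} (_hs : s ≤ min m n) {x y : Matrix (Fin m) (Fin n) ℝ}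
    (hx : x ∉ {z : Matrix (Fin m) (Fin n) ℝ | z.rank ≤ s})
    (hy : y ∈ projSet {z : Matrix (Fin m) (Fin n) ℝ | z.rank ≤ s} x) : s ≤ y.rank := by
  classical
  by_contra hlt
  push_neg at hlt
  have hxy : x - y ≠ 0 := by
    intro h0
    exact hx (by simpa [sub_eq_zero.mp h0] using hy.1)
  obtain ⟨i, hi⟩ : ∃ i, (x - y) i ≠ 0 := Function.ne_iff.mp hxy
  obtain ⟨j, hij⟩ : ∃ j, (x - y) i j ≠ 0 := Function.ne_iff.mp hi
  set u : Matrix (Fin m) (Fin n) ℝ := Matrix.of fun i' j' => if i' = i ∧ j' = j then 1 else 0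
    with hu
  have hranku : ∀ c : ℝ, (c • u).rank ≤ 1 := by
    intro c
    have hrange : LinearMap.range (c • u).mulVecLin ≤
        Submodule.span ℝ {(Pi.single i c : Fin m → ℝ)} := by
      rintro - ⟨v, rfl⟩
      rw [Submodule.mem_span_singleton]
      refine ⟨v j, ?_⟩
      ext i'
      simp only [Matrix.mulVecLin_apply, Matrix.mulVec, dotProduct, Matrix.smul_apply,
        hu, Matrix.of_apply, smul_eq_mul, Pi.smul_apply, Pi.single_apply, mul_ite, ite_mul,
        mul_zero, zero_mul, mul_one]
      rw [Finset.sum_congr rfl (fun j' _ => by rw [ite_and])]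
      split
      · simp_all [Finset.sum_ite_eq', mul_comm]
      · simp_all
    refine le_trans (Submodule.finrank_mono hrange) ?_
    by_cases hc : (Pi.single i c : Fin m → ℝ) = 0
    · rw [hc, Submodule.span_zero_singleton]
      simp
    · rw [finrank_span_singleton hc]
  have hmem : y + (x - y) i j • u ∈ {z : Matrix (Fin m) (Fin n) ℝ | z.rank ≤ s} := by
    have := rank_add_le' y ((x - y) i j • u)
    have h1 := hranku ((x - y) i j)
    have : (y + (x - y) i j • u).rank ≤ y.rank + 1 := this.trans (by omega)
    exact this.trans (by omega)
  -- contradiction with minimality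
  have hQ := hy.2 _ hmem
  rw [norm_le_iff_Q] at hQ
  have hxx : x - (y + (x - y) i j • u) = (x - y) - (x - y) i j • u := by abel
  rw [hxx, Q_sub_smul] at hQ
  have hipu : ip (x - y) u = (x - y) i j := by
    simp only [ip, hu, Matrix.of_apply, mul_ite, mul_one, mul_zero]
    rw [Finset.sum_congr rfl (fun i' _ => Finset.sum_congr rfl (fun j' _ => by rw [ite_and]))]
    simp [Finset.sum_ite_eq', Finset.sum_ite_eq]
  have hQu : Q u = 1 := by
    have hsq : ∀ i' j', (u i' j')^2 = if i' = i ∧ j' = j then (1:ℝ) else 0 := by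
      intro i' j'; simp only [hu, Matrix.of_apply]; split <;> norm_num
    have hinner : ∀ i' : Fin m, (∑ j', if i' = i ∧ j' = j then (1:ℝ) else 0)
        = if i' = i then 1 else 0 := by
      intro i'
      by_cases hii : i' = i <;> simp [hii, Finset.sum_ite_eq']
    simp only [Q, hsq, hinner]
    simp [Finset.sum_ite_eq']
  rw [hipu, hQu] at hQ
  nlinarith [sq_pos_of_ne_zero hij]

/-- Per-point key lemma: proximal-normal directions at a nearest point. -/
lemma key_point {s : ℕ} (hs : s ≤ min m n) {x y : Matrix (Fin m) (Fin n) ℝ}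
    (hy : y ∈ projSet {z : Matrix (Fin m) (Fin n) ℝ | z.rank ≤ s} x) (t : ℝ) :
    (t • (x - y)) * yᵀ = 0 ∧ (t • (x - y)).rank ≤ min m n - s := by
  by_cases hx : x ∈ {z : Matrix (Fin m) (Fin n) ℝ | z.rank ≤ s}
  · have hyx := proj_eq_self hx hy
    subst hyx
    simp [Matrix.rank_zero]
  · refine ⟨?_, ?_⟩
    · rw [Matrix.smul_mul, residual_mul_transpose_eq_zero hy, smul_zero]
    · have h1 := residual_mul_transpose_eq_zero hy
      have h2 := transpose_residual_mul_eq_zero hy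
      have h3 := rank_add_rank_le_min h1 h2
      have h4 := rank_proj_ge hs hx hy
      have h5 := rank_smul_le t (x - y)
      omega

/-- Lower semicontinuity of rank: rank can only drop in the limit. -/
lemma rank_le_of_tendsto {q : ℕ} {w : ℕ → Matrix (Fin m) (Fin n) ℝ}
    {v : Matrix (Fin m) (Fin n) ℝ} (hw : Tendsto w atTop (𝓝 v))
    (hr : ∀ k, (w k).rank ≤ q) : v.rank ≤ q := by
  classical
  by_contra hq
  push_neg at hq
  -- find q+1 linearly independent columns of v
  obtain ⟨b, hbsub, hbspan, hbind⟩ := exists_linearIndependent ℝ (Set.range vᵀ)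
  have hbfin : b.Finite := (Set.finite_range vᵀ).subset hbsub
  haveI := hbfin.fintype
  have hbcard : q + 1 ≤ b.toFinset.card := by
    have h1 : v.rank = Module.finrank ℝ (Submodule.span ℝ (Set.range vᵀ)) := by
      rw [Matrix.rank, Matrix.range_mulVecLin]
      rfl
    rw [← hbspan, finrank_span_set_eq_card hbind] at h1
    omega
  have hcard : Fintype.card (Fin (q + 1)) ≤ Fintype.card b := by
    rw [Set.toFinset_card] at hbcard
    simpa using hbcard
  obtain ⟨ι⟩ := Function.Embedding.nonempty_of_card_le hcard
  have hsel : ∀ e : b, ∃ j : Fin n, vᵀ j = (e : Fin m → ℝ) := fun e => hbsub e.2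
  choose col hcol using hsel
  set g : Fin (q + 1) → Fin n := fun l => col (ι l) with hg
  have hind : LinearIndependent ℝ (fun l : Fin (q + 1) => vᵀ (g l)) := by
    have : (fun l : Fin (q + 1) => vᵀ (g l)) = fun l => ((ι l : b) : Fin m → ℝ) := by
      funext l; exact hcol (ι l)
    rw [this]
    exact hbind.comp ι ι.injective
  -- the column-selection matrix
  set P : Matrix (Fin n) (Fin (q + 1)) ℝ :=
    Matrix.of fun j l => if j = g l then 1 else 0 with hP
  have hNP : ∀ (A : Matrix (Fin m) (Fin n) ℝ) (i : Fin m) (l : Fin (q + 1)),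
      (A * P) i l = A i (g l) := by
    intro A i l
    simp [hP, Matrix.mul_apply, mul_ite, Finset.sum_ite_eq']
  -- mulVec of v*P in terms of columns
  have hmv : ∀ c : Fin (q + 1) → ℝ, (v * P).mulVec c = ∑ l, c l • vᵀ (g l) := by
    intro c
    ext i
    simp only [Matrix.mulVec, dotProduct, Finset.sum_apply, Pi.smul_apply,
      Matrix.transpose_apply, smul_eq_mul, hNP]
    exact Finset.sum_congr rfl fun l _ => mul_comm _ _
  -- Gram matrix at v is invertible
  have hker : ∀ c : Fin (q + 1) → ℝ, ((v * P)ᵀ * (v * P)).mulVec c = 0 → c = 0 := by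
    intro c hc
    have h2 : c ⬝ᵥ (((v * P)ᵀ * (v * P)).mulVec c) = 0 := by
      rw [hc, dotProduct_zero]
    rw [← Matrix.mulVec_mulVec, Matrix.dotProduct_mulVec, Matrix.vecMul_transpose] at h2
    have h3 : (v * P).mulVec c = 0 := dotProduct_self_eq_zero.mp h2
    rw [hmv] at h3
    funext l
    exact Fintype.linearIndependent_iff.mp hind c h3 l
  have hGv : IsUnit ((v * P)ᵀ * (v * P)) := by
    rw [← Matrix.mulVec_injective_iff_isUnit]
    intro c d hcd
    have h0 : ((v * P)ᵀ * (v * P)).mulVec (c - d) = 0 := by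
      show ((v * P)ᵀ * (v * P)).mulVecLin (c - d) = 0
      rw [map_sub]
      show ((v * P)ᵀ * (v * P)).mulVec c - ((v * P)ᵀ * (v * P)).mulVec d = 0
      rw [hcd, sub_self]
    have := hker _ h0
    exact sub_eq_zero.mp this
  have hdet : ((v * P)ᵀ * (v * P)).det ≠ 0 :=
    IsUnit.ne_zero ((Matrix.isUnit_iff_isUnit_det _).mp hGv)
  -- continuity of the Gram determinant
  have hcont : Continuous (fun A : Matrix (Fin m) (Fin n) ℝ => ((A * P)ᵀ * (A * P)).det) :=
    ((continuous_id.matrix_mul continuous_const).matrix_transpose.matrix_mul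
      (continuous_id.matrix_mul continuous_const)).matrix_det
  have htd : Tendsto (fun k => ((w k * P)ᵀ * (w k * P)).det) atTop
      (𝓝 (((v * P)ᵀ * (v * P)).det)) := (hcont.tendsto v).comp hw
  obtain ⟨k, hk⟩ := (htd.eventually_ne hdet).exists
  have hGk : IsUnit ((w k * P)ᵀ * (w k * P)) :=
    (Matrix.isUnit_iff_isUnit_det _).mpr (isUnit_iff_ne_zero.mpr hk)
  have h6 : ((w k * P)ᵀ * (w k * P)).rank = q + 1 := by
    rw [Matrix.rank_of_isUnit _ hGk, Fintype.card_fin]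
  have h7 := Matrix.rank_mul_le_right ((w k * P)ᵀ) (w k * P)
  have h8 := Matrix.rank_mul_le_left (w k) P
  have h9 := hr k
  omega

/-- Nearest points converge to the limit of the base sequence. -/
lemma proj_tendsto {s : ℕ} {xb : Matrix (Fin m) (Fin n) ℝ} (hxb : xb.rank ≤ s)
    {x y : ℕ → Matrix (Fin m) (Fin n) ℝ}
    (hproj : ∀ k, y k ∈ projSet {z : Matrix (Fin m) (Fin n) ℝ | z.rank ≤ s} (x k))
    (hx : Tendsto x atTop (𝓝 xb)) : Tendsto y atTop (𝓝 xb) := by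
  have hd : Tendsto (fun k => x k - xb) atTop (𝓝 0) := by
    simpa using hx.sub (tendsto_const_nhds (x := xb))
  have hnorm : Tendsto (fun k => ‖x k - xb‖) atTop (𝓝 0) := by
    simpa using hd.norm
  have hbound : ∀ k, ‖y k - xb‖ ≤ 2 * ‖x k - xb‖ := by
    intro k
    have h1 : ‖x k - y k‖ ≤ ‖x k - xb‖ := (hproj k).2 xb hxb
    calc ‖y k - xb‖ = ‖(y k - x k) + (x k - xb)‖ := by
          congr 1; abel
      _ ≤ ‖y k - x k‖ + ‖x k - xb‖ := norm_add_le _ _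
      _ = ‖x k - y k‖ + ‖x k - xb‖ := by rw [norm_sub_rev]
      _ ≤ 2 * ‖x k - xb‖ := by linarith
  have h2 : Tendsto (fun k => y k - xb) atTop (𝓝 0) :=
    squeeze_zero_norm hbound (by simpa using hnorm.const_mul 2)
  have := h2.add (tendsto_const_nhds (x := xb))
  simpa using this

set_option maxHeartbeats 1000000 in
/-- The main sequential statement. -/
lemma main_seq {s : ℕ} (hs : s ≤ min m n) {xb : Matrix (Fin m) (Fin n) ℝ} (hxb : xb.rank ≤ s)
    (w : Matrix (Fin m) (Fin n) ℝ) (x y : ℕ → Matrix (Fin m) (Fin n) ℝ) (t : ℕ → ℝ)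
    (hproj : ∀ k, y k ∈ projSet {z : Matrix (Fin m) (Fin n) ℝ | z.rank ≤ s} (x k))
    (hx : Tendsto x atTop (𝓝 xb))
    (hw : Tendsto (fun k => t k • (x k - y k)) atTop (𝓝 w)) :
    w.rank ≤ min m n - s ∧ rowSpace w ⊓ rowSpace xb = ⊥ := by
  have hkey := fun k => key_point hs (hproj k) (t k)
  refine ⟨rank_le_of_tendsto hw (fun k => (hkey k).2), ?_⟩
  have hy := proj_tendsto hxb hproj hx
  have hcont : Continuous (fun p : Matrix (Fin m) (Fin n) ℝ × Matrix (Fin m) (Fin n) ℝ =>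
      p.1 * p.2ᵀ) := continuous_fst.matrix_mul continuous_snd.matrix_transpose
  have hmul : Tendsto (fun k => (t k • (x k - y k)) * (y k)ᵀ) atTop (𝓝 (w * xbᵀ)) :=
    (hcont.tendsto (w, xb)).comp (hw.prodMk_nhds hy)
  have hzero : (fun k => (t k • (x k - y k)) * (y k)ᵀ) = fun _ => (0 : Matrix (Fin m) (Fin m) ℝ) :=
    funext fun k => (hkey k).1
  have hmul0 : Tendsto (fun _ : ℕ => (0 : Matrix (Fin m) (Fin m) ℝ)) atTop (𝓝 (w * xbᵀ)) := by
    rw [← hzero]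
    exact hmul
  have hwxb : w * xbᵀ = 0 := tendsto_nhds_unique hmul0 tendsto_const_nhds
  have h0 : (wᵀ)ᵀ * xbᵀ = 0 := by rwa [Matrix.transpose_transpose]
  exact range_mulVecLin_inf_eq_bot h0
/-- limits of proximal normals to `S = {y : rank y ≤ s}` at points near
`xb ∈ S` have rank at most `r - s` and row space intersecting that of `xb` trivially;
consequently the limiting normal cone is contained in that set. -/
theorem normalCone_subset_of_rank_level_set (m n s : ℕ) (hs : s ≤ min m n)
    (xb : Matrix (Fin m) (Fin n) ℝ) (hxb : xb.rank ≤ s) :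
    (∀ (w : Matrix (Fin m) (Fin n) ℝ) (x y : ℕ → Matrix (Fin m) (Fin n) ℝ) (t : ℕ → ℝ),
      (∀ k, 0 ≤ t k) →
      (∀ k, x k ∉ {y : Matrix (Fin m) (Fin n) ℝ | y.rank ≤ s}) →
      (∀ k, y k ∈ projSet {y : Matrix (Fin m) (Fin n) ℝ | y.rank ≤ s} (x k)) →
      Tendsto x atTop (𝓝 xb) →
      Tendsto (fun k => t k • (x k - y k)) atTop (𝓝 w) →
      w.rank ≤ min m n - s ∧ rowSpace w ⊓ rowSpace xb = ⊥) ∧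
    normalCone {y : Matrix (Fin m) (Fin n) ℝ | y.rank ≤ s} xb ⊆
      {v : Matrix (Fin m) (Fin n) ℝ |
        rowSpace v ⊓ rowSpace xb = ⊥ ∧ v.rank ≤ min m n - s} := by
  constructor
  · intro w x y t _ht _hxs hproj hx hw
    exact main_seq hs hxb w x y t hproj hx hw
  · rintro v ⟨x, w, hx, hw, hk⟩
    choose t _ht y hyproj hwk using hk
    have hw' : Tendsto (fun k => t k • (x k - y k)) atTop (𝓝 v) := by
      have : (fun k => t k • (x k - y k)) = w := funext fun k => (hwk k).symm
      rw [this]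
      exact hw
    have hmain := main_seq hs hxb v x y t hyproj hx hw'
    exact ⟨hmain.2, hmain.1⟩

end RankPaper
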